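/- arXiv:2604.20964 — 2 statements merged into one kernel-verified Lean document; each statement's English description precedes it below -/
import Mathlib

section
/- Let φ = (1+√5)/2 and ξ = exp(πi/3). The image of the lattice ℤ[ξ] = ℤ + ℤξ in the torus ℂ/Λ, where Λ = ℤ(φ²+ξ) + ℤξ(φ²+ξ), is dense in ℂ/Λ. Equivalently, the subgroup ℤ[ξ] + Λ is dense in ℂ. -/
open Complex Real

lemma dense_int_add_int_mul {α : ℝ} (hα : Irrational α) :
    Dense {x : ℝ | ∃ a m : ℤ, x = a + m * α} := by
  set S : AddSubgroup ℝ :=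
    { carrier := {x : ℝ | ∃ a m : ℤ, x = a + m * α}
      zero_mem' := ⟨0, 0, by simp⟩
      add_mem' := by
        rintro x y ⟨a, m, rfl⟩ ⟨b, n, rfl⟩
        exact ⟨a + b, m + n, by push_cast; ring⟩
      neg_mem' := by
        rintro x ⟨a, m, rfl⟩
        exact ⟨-a, -m, by push_cast; ring⟩ } with hS
  have h1 : (1 : ℝ) ∈ S := ⟨1, 0, by simp⟩
  have h2 : α ∈ S := ⟨0, 1, by simp⟩
  rcases S.dense_or_cyclic with h | ⟨g, hg⟩
  · exact h
  · exfalso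
    rw [hg, AddSubgroup.mem_closure_singleton] at h1 h2
    obtain ⟨n, hn⟩ := h1
    obtain ⟨m, hm⟩ := h2
    rw [zsmul_eq_mul] at hn hm
    have hn0 : (n : ℝ) ≠ 0 := by
      rintro h; rw [h, zero_mul] at hn; exact one_ne_zero hn.symm
    have key : (m : ℝ) = α * n := by
      calc (m : ℝ) = (m : ℝ) * ((n : ℝ) * g) := by rw [hn, mul_one]
        _ = ((m : ℝ) * g) * n := by ring
        _ = α * n := by rw [hm]
    exact hα ⟨(m : ℚ) / n, by push_cast; rw [key, mul_div_assoc, div_self hn0, mul_one]⟩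

theorem Zxi_plus_lattice_dense :
    let φ : ℝ := (1 + Real.sqrt 5) / 2
    let ξ : ℂ := Complex.exp (Real.pi * Complex.I / 3)
    let u : ℂ := (φ : ℂ) ^ 2 + ξ
    let v : ℂ := ξ * u
    Dense {z : ℂ | ∃ a b m n : ℤ,
      z = (a : ℂ) + (b : ℂ) * ξ + (m : ℂ) * u + (n : ℂ) * v} := by
  intro φ ξ u v
  have h5 : Real.sqrt 5 ^ 2 = 5 := Real.sq_sqrt (by norm_num)
  have hφ2 : φ ^ 2 = (3 + Real.sqrt 5) / 2 := by
    show ((1 + Real.sqrt 5) / 2) ^ 2 = _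
    linear_combination h5 / 4
  have hirr : Irrational (φ ^ 2) := by
    rw [hφ2]
    have h1 : Irrational (Real.sqrt 5) := (by norm_num : Nat.Prime 5).irrational_sqrt
    have h2 : Irrational ((3 : ℚ) + Real.sqrt 5) := h1.ratCast_add 3
    have := h2.div_ratCast (q := 2) (by norm_num)
    simpa using this
  -- ξ facts
  have hξ : ξ = (1 / 2 : ℂ) + ((Real.sqrt 3 : ℂ) / 2) * Complex.I := by
    show Complex.exp _ = _
    rw [show (Real.pi * Complex.I / 3 : ℂ) = ((Real.pi / 3 : ℝ) : ℂ) * Complex.I by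
      push_cast; ring, Complex.exp_mul_I, ← Complex.ofReal_cos, ← Complex.ofReal_sin, Real.cos_pi_div_three, Real.sin_pi_div_three]
    push_cast; ring
  have h3sq : Real.sqrt 3 ^ 2 = 3 := Real.sq_sqrt (by norm_num)
  have h3sqC : ((Real.sqrt 3 : ℝ) : ℂ) ^ 2 = 3 := by
    rw [← Complex.ofReal_pow, h3sq]; norm_num
  have h3ne : Real.sqrt 3 ≠ 0 := by positivity
  have hξ2 : ξ ^ 2 = ξ - 1 := by
    rw [hξ]
    linear_combination (Complex.I ^ 2 / 4) * h3sqC + (3 / 4) * Complex.I_sq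
  have habs : ‖ξ‖ = 1 := by
    show ‖Complex.exp _‖ = 1
    rw [Complex.norm_exp]
    simp
  have hdense := dense_int_add_int_mul hirr
  rw [Metric.dense_iff] at hdense ⊢
  intro z r hr
  set x : ℝ := z.re - z.im / Real.sqrt 3 with hxdef
  set y : ℝ := 2 * z.im / Real.sqrt 3 with hydef
  obtain ⟨x', hx'ball, a, m, rfl⟩ := hdense x (r / 2) (by linarith)
  obtain ⟨y', hy'ball, b, n, rfl⟩ := hdense y (r / 2) (by linarith)
  rw [Metric.mem_ball, Real.dist_eq] at hx'ball hy'ball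
  refine ⟨((a : ℝ) + (m : ℝ) * φ ^ 2 : ℝ) + ((b : ℝ) + (n : ℝ) * φ ^ 2 : ℝ) * ξ, ?_, ?_⟩
  · -- distance estimate
    rw [Metric.mem_ball, dist_comm, Complex.dist_eq]
    have hz : z = (x : ℂ) + (y : ℂ) * ξ := by
      rw [hξ]
      apply Complex.ext
      · simp only [hxdef, hydef, Complex.add_re, Complex.mul_re, Complex.add_im,
          Complex.mul_im, Complex.ofReal_re, Complex.ofReal_im, Complex.I_re, Complex.I_im,
          Complex.div_re, Complex.div_im, Complex.one_re, Complex.one_im,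
          Complex.normSq_ofNat, Complex.re_ofNat, Complex.im_ofNat]
        field_simp
        ring
      · simp only [hxdef, hydef, Complex.add_re, Complex.mul_re, Complex.add_im,
          Complex.mul_im, Complex.ofReal_re, Complex.ofReal_im, Complex.I_re, Complex.I_im,
          Complex.div_re, Complex.div_im, Complex.one_re, Complex.one_im,
          Complex.normSq_ofNat, Complex.re_ofNat, Complex.im_ofNat]
        field_simp
        ring
    set X : ℝ := (a : ℝ) + (m : ℝ) * φ ^ 2
    set Y : ℝ := (b : ℝ) + (n : ℝ) * φ ^ 2
    have : z - ((X : ℂ) + (Y : ℂ) * ξ) = ((x - X : ℝ) : ℂ) + ((y - Y : ℝ) : ℂ) * ξ := by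
      rw [hz]; push_cast; ring
    rw [this]
    calc ‖(((x - X : ℝ) : ℂ) + ((y - Y : ℝ) : ℂ) * ξ)‖
        ≤ ‖((x - X : ℝ) : ℂ)‖ + ‖(((y - Y : ℝ) : ℂ) * ξ)‖ :=
          norm_add_le _ _
      _ = |x - X| + |y - Y| := by
          rw [norm_mul, habs, mul_one, Complex.norm_real, Complex.norm_real, Real.norm_eq_abs, Real.norm_eq_abs]
      _ < r / 2 + r / 2 := by
          have h1 : |x - X| < r / 2 := by rwa [abs_sub_comm] at hx'ball
          have h2 : |y - Y| < r / 2 := by rwa [abs_sub_comm] at hy'ball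
          exact add_lt_add h1 h2
      _ = r := by ring
  · -- membership
    refine ⟨a + n, b - m - n, m, n, ?_⟩
    show _ = _ + _ + (m : ℂ) * ((φ : ℂ) ^ 2 + ξ) + (n : ℂ) * (ξ * ((φ : ℂ) ^ 2 + ξ))
    push_cast
    linear_combination (-(n : ℂ)) * hξ2
end

section
/- The ℤ²-action R on the torus ℂ/Λ defined by R(k,l)(x) = x + k + l·ξ (translations by elements of ℤ[ξ]) is minimal, i.e., every orbit is dense. -/
open Complex Real

noncomputable def hatXi : ℂ := Complex.exp (Real.pi * Complex.I / 3)
noncomputable def hatPhi : ℝ := (1 + Real.sqrt 5) / 2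
noncomputable def hatU : ℂ := (hatPhi : ℂ) ^ 2 + hatXi
noncomputable def hatV : ℂ := hatXi * hatU
noncomputable def hatLambda : AddSubgroup ℂ := AddSubgroup.closure {hatU, hatV}

lemma hatXi_re : hatXi.re = 1/2 := by
  have : hatXi = Complex.exp ((Real.pi/3 : ℝ) * Complex.I) := by
    unfold hatXi; push_cast; ring_nf
  rw [this, Complex.exp_ofReal_mul_I_re, Real.cos_pi_div_three]

lemma hatXi_im : hatXi.im = Real.sqrt 3 / 2 := by
  have : hatXi = Complex.exp ((Real.pi/3 : ℝ) * Complex.I) := by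
    unfold hatXi; push_cast; ring_nf
  rw [this, Complex.exp_ofReal_mul_I_im, Real.sin_pi_div_three]

lemma hatXi_sq : hatXi ^ 2 = hatXi - 1 := by
  have h3 : Real.sqrt 3 * Real.sqrt 3 = 3 := Real.mul_self_sqrt (by norm_num)
  apply Complex.ext <;>
    simp [pow_two, Complex.mul_re, Complex.mul_im, hatXi_re, hatXi_im] <;> nlinarith

lemma hatPhi_sq_irrational : Irrational (hatPhi ^ 2) := by
  have h5 : Irrational (Real.sqrt 5) := (by norm_num : Nat.Prime 5).irrational_sqrt
  have h5' : Real.sqrt 5 * Real.sqrt 5 = 5 := Real.mul_self_sqrt (by norm_num)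
  have : hatPhi ^ 2 = ((3/2 : ℚ) : ℝ) + (1/2 : ℚ) * Real.sqrt 5 := by
    unfold hatPhi; push_cast; nlinarith
  rw [this]
  exact ((h5.ratCast_mul (by norm_num : (1/2:ℚ) ≠ 0)).ratCast_add (3/2))

lemma dense_A : Dense ((AddSubgroup.closure {1, hatPhi ^ 2} : AddSubgroup ℝ) : Set ℝ) := by
  rcases AddSubgroup.dense_or_cyclic (AddSubgroup.closure {1, hatPhi ^ 2}) with h | ⟨a, ha⟩
  · exact h
  · exfalso
    have h1 : (1 : ℝ) ∈ AddSubgroup.closure ({a} : Set ℝ) := by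
      rw [← ha]; exact AddSubgroup.subset_closure (by simp)
    have h2 : hatPhi ^ 2 ∈ AddSubgroup.closure ({a} : Set ℝ) := by
      rw [← ha]; exact AddSubgroup.subset_closure (by simp)
    rw [AddSubgroup.mem_closure_singleton] at h1 h2
    obtain ⟨n, hn⟩ := h1
    obtain ⟨m, hm⟩ := h2
    have hn0 : (n : ℝ) ≠ 0 := by
      intro h
      rw [zsmul_eq_mul, h, zero_mul] at hn; exact one_ne_zero hn.symm
    apply hatPhi_sq_irrational
    refine ⟨(m : ℚ) / (n : ℚ), ?_⟩
    rw [zsmul_eq_mul] at hn hm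
    have : a = 1 / (n : ℝ) := by field_simp at hn ⊢; linarith [hn]
    push_cast
    rw [← hm, this]
    field_simp

noncomputable def Shat : AddSubgroup ℂ := AddSubgroup.closure {1, hatXi, hatU, hatV}

lemma one_mem_S : (1 : ℂ) ∈ Shat := AddSubgroup.subset_closure (by simp)
lemma xi_mem_S : hatXi ∈ Shat := AddSubgroup.subset_closure (by simp)
lemma u_mem_S : hatU ∈ Shat := AddSubgroup.subset_closure (by simp)
lemma v_mem_S : hatV ∈ Shat := AddSubgroup.subset_closure (by simp)

lemma phiC_mem_S : ((hatPhi ^ 2 : ℝ) : ℂ) ∈ Shat := by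
  have : ((hatPhi ^ 2 : ℝ) : ℂ) = hatU - hatXi := by unfold hatU; push_cast; ring
  rw [this]; exact sub_mem u_mem_S xi_mem_S

lemma phiC_xi_mem_S : ((hatPhi ^ 2 : ℝ) : ℂ) * hatXi ∈ Shat := by
  have : ((hatPhi ^ 2 : ℝ) : ℂ) * hatXi = hatV - hatXi + 1 := by
    unfold hatV hatU
    push_cast
    linear_combination -hatXi_sq
  rw [this]; exact add_mem (sub_mem v_mem_S xi_mem_S) one_mem_S

lemma coe_A_mem_S : ∀ a ∈ (AddSubgroup.closure {1, hatPhi ^ 2} : AddSubgroup ℝ),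
    ((a : ℝ) : ℂ) ∈ Shat := by
  have h : (AddSubgroup.closure {1, hatPhi ^ 2} : AddSubgroup ℝ) ≤
      Shat.comap Complex.ofRealHom.toAddMonoidHom := by
    rw [AddSubgroup.closure_le]
    rintro x (rfl | rfl)
    · simpa using one_mem_S
    · simpa using phiC_mem_S
  exact fun a ha => h ha

lemma coe_A_xi_mem_S : ∀ a ∈ (AddSubgroup.closure {1, hatPhi ^ 2} : AddSubgroup ℝ),
    ((a : ℝ) : ℂ) * hatXi ∈ Shat := by
  have h : (AddSubgroup.closure {1, hatPhi ^ 2} : AddSubgroup ℝ) ≤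
      Shat.comap ((AddMonoidHom.mulRight hatXi).comp Complex.ofRealHom.toAddMonoidHom) := by
    rw [AddSubgroup.closure_le]
    rintro x (rfl | rfl)
    · simpa using xi_mem_S
    · simpa using phiC_xi_mem_S
  exact fun a ha => h ha

lemma dense_S : Dense (Shat : Set ℂ) := by
  set A := (AddSubgroup.closure {1, hatPhi ^ 2} : AddSubgroup ℝ)
  have hs3 : (0:ℝ) < Real.sqrt 3 := Real.sqrt_pos.mpr (by norm_num)
  set f : ℝ × ℝ → ℂ := fun p => (p.1 : ℂ) + (p.2 : ℂ) * hatXi with hf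
  have hcont : Continuous f := by
    apply Continuous.add
    · exact Complex.continuous_ofReal.comp continuous_fst
    · exact (Complex.continuous_ofReal.comp continuous_snd).mul continuous_const
  have hsurj : Function.Surjective f := by
    intro z
    refine ⟨(z.re - z.im / Real.sqrt 3, 2 * z.im / Real.sqrt 3), ?_⟩
    apply Complex.ext <;>
      simp [hf, Complex.add_re, Complex.add_im, Complex.mul_re, Complex.mul_im,
        hatXi_re, hatXi_im] <;> field_simp <;> ring
  have hdense : Dense ((A : Set ℝ) ×ˢ (A : Set ℝ)) := dense_A.prod dense_A
  have himg : Dense (f '' ((A : Set ℝ) ×ˢ (A : Set ℝ))) :=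
    hsurj.denseRange.dense_image hcont hdense
  refine himg.mono ?_
  rintro _ ⟨⟨a, b⟩, ⟨ha, hb⟩, rfl⟩
  exact add_mem (coe_A_mem_S a ha) (coe_A_xi_mem_S b hb)

/-- The ℤ²-action by translations by elements of ℤ[ξ] on the torus ℂ/Λ is
minimal: every orbit is dense. -/
theorem hat_action_minimal :
    ∀ x : ℂ ⧸ hatLambda,
      Dense {y : ℂ ⧸ hatLambda | ∃ k l : ℤ,
        y = x + QuotientAddGroup.mk ((k : ℂ) + (l : ℂ) * hatXi)} := by
  intro x
  set pq : ℂ → ℂ ⧸ hatLambda := QuotientAddGroup.mk with hpq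
  have hpqcont : Continuous pq := continuous_quotient_mk'
  have hpqsurj : Function.Surjective pq := QuotientAddGroup.mk_surjective
  -- image of Shat under pq lands in the orbit of 0
  have key : ∀ s ∈ Shat, ∃ k l : ℤ, pq s = pq ((k : ℂ) + (l : ℂ) * hatXi) := by
    intro s hs
    induction hs using AddSubgroup.closure_induction with
    | mem g hg =>
      rcases hg with rfl | rfl | rfl | rfl
      · exact ⟨1, 0, by push_cast; norm_num⟩
      · exact ⟨0, 1, by push_cast; norm_num⟩
      · refine ⟨0, 0, ?_⟩
        have : pq hatU = 0 := (QuotientAddGroup.eq_zero_iff _).mpr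
          (AddSubgroup.subset_closure (by simp))
        rw [this, hpq]; simp
      · refine ⟨0, 0, ?_⟩
        have : pq hatV = 0 := (QuotientAddGroup.eq_zero_iff _).mpr
          (AddSubgroup.subset_closure (by simp))
        rw [this, hpq]; simp
    | zero => exact ⟨0, 0, by push_cast; norm_num⟩
    | add s t _ _ hst htt =>
      obtain ⟨k, l, hk⟩ := hst
      obtain ⟨k', l', hk'⟩ := htt
      refine ⟨k + k', l + l', ?_⟩
      have : pq (s + t) = pq s + pq t := rfl
      rw [this, hk, hk', ← QuotientAddGroup.mk_add]
      congr 1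
      push_cast; ring
    | neg s _ hst =>
      obtain ⟨k, l, hk⟩ := hst
      refine ⟨-k, -l, ?_⟩
      have : pq (-s) = -pq s := rfl
      rw [this, hk, ← QuotientAddGroup.mk_neg]
      congr 1
      push_cast; ring
  have hD : Dense (pq '' (Shat : Set ℂ)) := hpqsurj.denseRange.dense_image hpqcont dense_S
  have hadd : Dense ((fun z => x + z) '' (pq '' (Shat : Set ℂ))) := by
    have hc : Continuous (fun z : ℂ ⧸ hatLambda => x + z) := continuous_const.add continuous_id
    have hsur : Function.Surjective (fun z : ℂ ⧸ hatLambda => x + z) := fun y =>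
      ⟨y - x, by simp⟩
    exact hsur.denseRange.dense_image hc hD
  refine hadd.mono ?_
  rintro _ ⟨_, ⟨s, hs, rfl⟩, rfl⟩
  obtain ⟨k, l, hk⟩ := key s hs
  exact ⟨k, l, by rw [hk]⟩
end
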